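/- arXiv:2311.09464 — 5 statements merged into one kernel-verified Lean document; each statement's English description precedes it below -/
import Mathlib

section
/- As the complex variable s tends to 1 (with s ≠ 1), the function ζ′(s)/ζ(s) + 1/(s − 1) tends to the Euler–Mascheroni constant γ. -/
open Filter Topology

theorem zeta_logDeriv_tendsto_eulerMascheroni :
    Tendsto (fun s : ℂ => deriv riemannZeta s / riemannZeta s + 1 / (s - 1))
      (nhdsWithin 1 {(1 : ℂ)}ᶜ) (nhds (Real.eulerMascheroniConstant : ℂ)) := by
  set γ : ℂ := (Real.eulerMascheroniConstant : ℂ)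
  set g : ℂ → ℂ := Function.update (fun s => riemannZeta s - 1 / (s - 1)) 1 γ with hgdef
  have hg1 : g 1 = γ := Function.update_self _ _ _
  have hgeq : ∀ s : ℂ, s ≠ 1 → g s = riemannZeta s - 1 / (s - 1) := fun s hs =>
    Function.update_of_ne hs _ _
  have hgev : (fun s : ℂ => riemannZeta s - 1 / (s - 1)) =ᶠ[𝓝[≠] (1 : ℂ)] g := by
    filter_upwards [self_mem_nhdsWithin] with s hs using (hgeq s hs).symm
  -- g is analytic at 1 by the removable singularity theorem
  have hcont : ContinuousAt g 1 := by
    rw [← continuousWithinAt_compl_self]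
    unfold ContinuousWithinAt
    rw [hg1]
    exact (tendsto_riemannZeta_sub_one_div.congr' hgev)
  have hdiff : ∀ᶠ z in 𝓝[≠] (1 : ℂ), DifferentiableAt ℂ g z := by
    filter_upwards [self_mem_nhdsWithin] with z hz
    have hz' : z ≠ 1 := hz
    have : DifferentiableAt ℂ (fun s => riemannZeta s - 1 / (s - 1)) z := by
      apply (differentiableAt_riemannZeta hz').sub
      apply DifferentiableAt.div (differentiableAt_const _)
        ((differentiableAt_id.sub (differentiableAt_const _)))
      simpa [sub_eq_zero] using hz'
    apply this.congr_of_eventuallyEq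
    filter_upwards [isOpen_compl_singleton.mem_nhds hz] with w hw using hgeq w hw
  have hga : AnalyticAt ℂ g 1 :=
    Complex.analyticAt_of_differentiable_on_punctured_nhds_of_continuousAt hdiff hcont
  have hgc : ContinuousAt g 1 := hga.continuousAt
  have hg'c : ContinuousAt (deriv g) 1 := by
    have h1 : ContinuousAt (fderiv ℂ g) 1 := hga.fderiv.continuousAt
    have h2 : ContinuousAt (fun y => fderiv ℂ g y 1) 1 :=
      ((ContinuousLinearMap.apply ℂ ℂ (1 : ℂ)).continuous.continuousAt).comp h1
    have heq : deriv g = fun y => fderiv ℂ g y 1 := funext fun y => (fderiv_apply_one_eq_deriv).symm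
    rw [heq]; exact h2
  -- the denominator (s-1) * g s + 1 is nonzero near 1
  have hDc : ContinuousAt (fun s : ℂ => (s - 1) * g s + 1) 1 :=
    (((continuousAt_id.sub continuousAt_const).mul hgc).add continuousAt_const)
  have hD1 : (fun s : ℂ => (s - 1) * g s + 1) 1 = 1 := by simp
  have hDne : ∀ᶠ s in 𝓝 (1 : ℂ), (s - 1) * g s + 1 ≠ 0 := by
    apply hDc.eventually_ne
    simp
  -- rewrite the function near 1
  have key : ∀ᶠ s in 𝓝[≠] (1 : ℂ),
      deriv riemannZeta s / riemannZeta s + 1 / (s - 1)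
        = ((s - 1) * deriv g s + g s) / ((s - 1) * g s + 1) := by
    have hderiv : ∀ᶠ s in 𝓝[≠] (1 : ℂ), deriv riemannZeta s = deriv g s - 1 / (s - 1) ^ 2 := by
      filter_upwards [self_mem_nhdsWithin] with s hs
      have hs' : (s : ℂ) ≠ 1 := hs
      have hsub : s - 1 ≠ 0 := sub_ne_zero.mpr hs'
      have hinv : DifferentiableAt ℂ (fun w : ℂ => 1 / (w - 1)) s := by
        apply DifferentiableAt.div (differentiableAt_const _)
          ((differentiableAt_id.sub (differentiableAt_const _)))
        simpa [sub_eq_zero] using hs'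
      have heq : riemannZeta =ᶠ[𝓝 s] fun w => g w + 1 / (w - 1) := by
        filter_upwards [isOpen_compl_singleton.mem_nhds hs'] with w hw
        rw [hgeq w hw]; ring
      have hdg : DifferentiableAt ℂ g s := by
        have : DifferentiableAt ℂ (fun w => riemannZeta w - 1 / (w - 1)) s :=
          (differentiableAt_riemannZeta hs').sub hinv
        apply this.congr_of_eventuallyEq
        filter_upwards [isOpen_compl_singleton.mem_nhds hs'] with w hw using hgeq w hw
      rw [heq.deriv_eq, deriv_fun_add hdg hinv]
      have : deriv (fun w : ℂ => 1 / (w - 1)) s = -1 / (s - 1) ^ 2 := by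
        have h1 : HasDerivAt (fun w : ℂ => w - 1) 1 s := (hasDerivAt_id s).sub_const 1
        have h2 : HasDerivAt (fun w : ℂ => (w - 1)⁻¹) (-1 / (s - 1) ^ 2) s := by
          exact h1.inv hsub
        simpa [one_div] using h2.deriv
      rw [this]; ring
    filter_upwards [hderiv, self_mem_nhdsWithin, nhdsWithin_le_nhds hDne]
      with s hd hs hD
    have hg : g s = riemannZeta s - 1 / (s - 1) := hgeq s hs
    have hs' : (s : ℂ) ≠ 1 := hs
    have hsub : s - 1 ≠ 0 := sub_ne_zero.mpr hs'
    have hzeta : riemannZeta s = ((s - 1) * g s + 1) / (s - 1) := by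
      rw [hg]; field_simp; ring
    rw [hd, hzeta]
    field_simp
    ring
  rw [tendsto_congr' key]
  have hnum : Tendsto (fun s : ℂ => (s - 1) * deriv g s + g s) (𝓝[≠] 1) (𝓝 γ) := by
    have : ContinuousAt (fun s : ℂ => (s - 1) * deriv g s + g s) 1 :=
      ((continuousAt_id.sub continuousAt_const).mul hg'c).add hgc
    have h := this.continuousWithinAt (s := {(1 : ℂ)}ᶜ)
    simpa [ContinuousWithinAt, hg1] using h
  have hden : Tendsto (fun s : ℂ => (s - 1) * g s + 1) (𝓝[≠] 1) (𝓝 1) := by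
    have h := hDc.continuousWithinAt (s := {(1 : ℂ)}ᶜ)
    simpa [ContinuousWithinAt, hg1] using h
  have h := hnum.div hden one_ne_zero
  rw [div_one] at h
  exact h
end

section
/- For every integer n ≥ 3, |∑_{k ≤ δ(n)} 1/k − ψ₁(n)| < 1. -/
/-- η(j) = p if j = p^k is a power of a prime p (k ≥ 1), and η(j) = 1 otherwise. -/
noncomputable def eta (j : ℕ) : ℕ := if IsPrimePow j then j.minFac else 1

/-- δ(n) = ∏_{m < n} ∏_{j ≤ m} η(j). -/
noncomputable def delta (n : ℕ) : ℕ :=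
  ∏ m ∈ Finset.range n, ∏ j ∈ Finset.Icc 1 m, eta j

/-- The Chebyshev psi function ψ(x) = ∑_{m ≤ x} Λ(m). -/
noncomputable def chebyshevPsi (x : ℝ) : ℝ :=
  ∑ m ∈ Finset.Icc 1 ⌊x⌋₊, ArithmeticFunction.vonMangoldt m

/-- ψ₁(x) = ∫₁ˣ ψ(u) du. -/
noncomputable def chebyshevPsi1 (x : ℝ) : ℝ := ∫ u in (1:ℝ)..x, chebyshevPsi u

lemma eta_pos (j : ℕ) : 0 < eta j := by
  unfold eta
  split
  · exact Nat.minFac_pos j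
  · exact one_pos

lemma psi_monotone : Monotone chebyshevPsi := by
  intro x y hxy
  unfold chebyshevPsi
  apply Finset.sum_le_sum_of_subset_of_nonneg
  · exact Finset.Icc_subset_Icc_right (Nat.floor_mono hxy)
  · intro i _ _
    exact ArithmeticFunction.vonMangoldt_nonneg

lemma psi_integral_step (m : ℕ) :
    ∫ u in (m : ℝ)..((m : ℝ) + 1), chebyshevPsi u = chebyshevPsi m := by
  have h : ∫ u in (m : ℝ)..((m : ℝ) + 1), chebyshevPsi u
      = ∫ _ in (m : ℝ)..((m : ℝ) + 1), chebyshevPsi m := by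
    apply intervalIntegral.integral_congr_ae
    have hne := (MeasureTheory.compl_mem_ae_iff (μ := MeasureTheory.volume)).mpr
      (MeasureTheory.measure_singleton ((m : ℝ) + 1))
    filter_upwards [hne] with u hu hu'
    simp only [Set.mem_compl_iff, Set.mem_singleton_iff] at hu
    rw [Set.uIoc_of_le (by linarith)] at hu'
    have hfloor : ⌊u⌋₊ = m := by
      have hu0 : (0:ℝ) ≤ u := le_of_lt (lt_of_le_of_lt (Nat.cast_nonneg m) hu'.1)
      rw [Nat.floor_eq_iff hu0]
      exact ⟨le_of_lt hu'.1, lt_of_le_of_ne hu'.2 hu⟩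
    unfold chebyshevPsi
    rw [hfloor, Nat.floor_natCast]
  rw [h, intervalIntegral.integral_const, smul_eq_mul]
  ring

lemma psi1_nat (n : ℕ) (hn : 1 ≤ n) :
    chebyshevPsi1 n = ∑ m ∈ Finset.Ico 1 n, chebyshevPsi m := by
  induction n, hn using Nat.le_induction with
  | base => simp [chebyshevPsi1]
  | succ n hn ih =>
    have hsplit : chebyshevPsi1 (n + 1 : ℕ)
        = chebyshevPsi1 n + ∫ u in (n : ℝ)..((n : ℝ) + 1), chebyshevPsi u := by
      unfold chebyshevPsi1
      push_cast
      rw [intervalIntegral.integral_add_adjacent_intervals]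
      · exact psi_monotone.intervalIntegrable
      · exact psi_monotone.intervalIntegrable
    rw [hsplit, ih, psi_integral_step, Finset.sum_Ico_succ_top hn]

lemma log_eta (j : ℕ) : Real.log (eta j) = ArithmeticFunction.vonMangoldt j := by
  rw [ArithmeticFunction.vonMangoldt_apply]
  unfold eta
  split
  · rfl
  · simp

lemma psi_nat (m : ℕ) :
    chebyshevPsi m = ∑ j ∈ Finset.Icc 1 m, ArithmeticFunction.vonMangoldt j := by
  unfold chebyshevPsi
  rw [Nat.floor_natCast]

lemma log_delta (n : ℕ) (hn : 1 ≤ n) :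
    Real.log (delta n) = chebyshevPsi1 n := by
  rw [psi1_nat n hn]
  unfold delta
  push_cast
  rw [Real.log_prod]
  · rw [Finset.range_eq_Ico, Finset.sum_eq_sum_Ico_succ_bot (by omega : 0 < n)]
    simp only [Finset.Icc_self, zero_add]
    have h0 : Real.log (∏ j ∈ Finset.Icc 1 0, (eta j : ℝ)) = 0 := by simp
    rw [h0, zero_add]
    apply Finset.sum_congr rfl
    intro m _
    rw [Real.log_prod, psi_nat]
    · apply Finset.sum_congr rfl
      intro j _
      exact log_eta j
    · intro j _
      exact_mod_cast (eta_pos j).ne'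
  · intro m _
    have : (0:ℝ) < ∏ j ∈ Finset.Icc 1 m, (eta j : ℝ) := by
      apply Finset.prod_pos
      intro j _
      exact_mod_cast eta_pos j
    exact this.ne'

lemma two_le_delta (n : ℕ) (hn : 3 ≤ n) : 2 ≤ delta n := by
  have h2 : ∏ j ∈ Finset.Icc 1 2, eta j = 2 := by
    have he1 : eta 1 = 1 := by simp [eta, not_isPrimePow_one]
    have he2 : eta 2 = 2 := by
      simp [eta, Nat.prime_two.isPrimePow]
    rw [show Finset.Icc 1 2 = {1, 2} by rfl]
    rw [Finset.prod_insert (by decide), Finset.prod_singleton, he1, he2]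
    norm_num
  calc 2 = ∏ j ∈ Finset.Icc 1 2, eta j := h2.symm
    _ ≤ delta n := by
        exact Finset.single_le_prod'
          (f := fun m => ∏ j ∈ Finset.Icc 1 m, eta j)
          (fun m _ => Nat.one_le_iff_ne_zero.mpr
            (Finset.prod_pos (fun j _ => eta_pos j)).ne')
          (Finset.mem_range.mpr (by omega))

lemma harmonic_bounds (N : ℕ) (hN : 2 ≤ N) :
    Real.log N < (harmonic N : ℝ) ∧ (harmonic N : ℝ) < 1 + Real.log N := by
  constructor
  · have h1 : Real.log N < Real.log (N + 1) :=
      Real.log_lt_log (by positivity) (by linarith)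
    calc Real.log N < Real.log (N + 1) := h1
      _ = Real.log ((N : ℕ) + 1 : ℕ) := by push_cast; ring_nf
      _ ≤ (harmonic N : ℝ) := log_add_one_le_harmonic N
  · obtain ⟨M, rfl⟩ : ∃ M, N = M + 1 := ⟨N - 1, by omega⟩
    have hM : 1 ≤ M := by omega
    have hMpos : (0:ℝ) < M := by exact_mod_cast hM
    have key : Real.log M + 1 / ((M:ℝ) + 1) < Real.log ((M:ℝ) + 1) := by
      have hx : Real.log ((M:ℝ) / ((M:ℝ) + 1)) < (M:ℝ) / ((M:ℝ) + 1) - 1 := by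
        apply Real.log_lt_sub_one_of_pos (by positivity)
        exact ne_of_lt (by rw [div_lt_one (by positivity)]; linarith)
      rw [Real.log_div hMpos.ne' (by positivity)] at hx
      have : (M:ℝ) / ((M:ℝ) + 1) - 1 = -(1 / ((M:ℝ) + 1)) := by field_simp; ring
      rw [this] at hx
      linarith
    have hrec : (harmonic (M + 1) : ℝ) = (harmonic M : ℝ) + 1 / ((M:ℝ) + 1) := by
      rw [harmonic_succ]
      push_cast
      ring
    have hup : (harmonic M : ℝ) ≤ 1 + Real.log M := harmonic_le_one_add_log M
    rw [hrec]
    push_cast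
    linarith

theorem harmonic_delta_close_to_psi1 (n : ℕ) (hn : 3 ≤ n) :
    |(∑ k ∈ Finset.Icc 1 (delta n), (1 : ℝ) / k) - chebyshevPsi1 n| < 1 := by
  have hsum : (∑ k ∈ Finset.Icc 1 (delta n), (1 : ℝ) / k) = (harmonic (delta n) : ℝ) := by
    rw [harmonic_eq_sum_Icc]
    push_cast
    simp [one_div]
  have hδ : 2 ≤ delta n := two_le_delta n hn
  have hlog : Real.log (delta n) = chebyshevPsi1 n := log_delta n (by omega)
  obtain ⟨hlo, hhi⟩ := harmonic_bounds (delta n) hδ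
  rw [hsum, ← hlog, abs_lt]
  constructor <;> linarith
end

section
/- For every complex s with Re s > 1, −ζ′(s)/ζ(s) = s(s + 1)·∫₁^∞ ψ₁(x)/x^{s+2} dx. -/
open MeasureTheory
open Set
open scoped ArithmeticFunction

lemma psi1_formula {x : ℝ} (hx : 1 ≤ x) :
    chebyshevPsi1 x = ∑ n ∈ Finset.Icc 1 ⌊x⌋₊, Λ n * (x - n) := by
  have h0x : (0:ℝ) ≤ x := by linarith
  have key : ∀ u ∈ Set.uIcc (1:ℝ) x, chebyshevPsi u
      = ∑ n ∈ Finset.Icc 1 ⌊x⌋₊, Set.indicator (Set.Ici (n:ℝ)) (fun _ => (Λ n : ℝ)) u := by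
    intro u hu
    rw [Set.uIcc_of_le hx] at hu
    have h1u : 1 ≤ u := hu.1
    have h0u : (0:ℝ) ≤ u := by linarith
    have hfl : ⌊u⌋₊ ≤ ⌊x⌋₊ := Nat.floor_le_floor hu.2
    unfold chebyshevPsi
    rw [Finset.sum_indicator_eq_sum_filter]
    congr 1
    ext m
    simp only [Finset.mem_filter, Finset.mem_Icc, Set.mem_Ici, Nat.le_floor_iff h0u]
    constructor
    · exact fun h => ⟨⟨h.1, Nat.le_floor (h.2.trans hu.2)⟩, h.2⟩
    · exact fun h => ⟨h.1.1, h.2⟩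
  rw [chebyshevPsi1, intervalIntegral.integral_congr key,
    intervalIntegral.integral_finset_sum]
  · refine Finset.sum_congr rfl fun n hn => ?_
    simp only [Finset.mem_Icc] at hn
    have hn1 : (1:ℝ) ≤ n := by exact_mod_cast hn.1
    have hnx : (n:ℝ) ≤ x := le_trans (by exact_mod_cast Nat.le_floor_iff h0x |>.mp hn.2) le_rfl
    rw [intervalIntegral.integral_of_le hx, MeasureTheory.setIntegral_indicator measurableSet_Ici,
      MeasureTheory.setIntegral_const]
    have hvol : volume (Ioc 1 x ∩ Ici (n:ℝ)) = ENNReal.ofReal (x - n) := by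
      refine le_antisymm ?_ ?_
      · calc volume (Ioc 1 x ∩ Ici (n:ℝ)) ≤ volume (Icc (n:ℝ) x) := by
              refine measure_mono fun u hu => ⟨hu.2, hu.1.2⟩
           _ = ENNReal.ofReal (x - n) := Real.volume_Icc
      · calc ENNReal.ofReal (x - n) = volume (Ioc (n:ℝ) x) := Real.volume_Ioc.symm
           _ ≤ volume (Ioc 1 x ∩ Ici (n:ℝ)) := by
              refine measure_mono fun u hu => ⟨⟨lt_of_le_of_lt hn1 hu.1, hu.2⟩, le_of_lt hu.1⟩
    rw [measureReal_def, hvol, ENNReal.toReal_ofReal (by linarith), smul_eq_mul, mul_comm]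
  · intro n hn
    apply IntervalIntegrable.mono_fun'
      (g := fun _ : ℝ => (Λ n : ℝ)) (intervalIntegrable_const)
    · exact (Measurable.indicator measurable_const measurableSet_Ici).aestronglyMeasurable
    · filter_upwards with u
      simp only [Real.norm_eq_abs]
      rw [abs_of_nonneg (Set.indicator_nonneg (fun _ _ => ArithmeticFunction.vonMangoldt_nonneg) u)]
      exact Set.indicator_apply_le' (fun _ => le_rfl) (fun _ => ArithmeticFunction.vonMangoldt_nonneg)


-- helper: shift integral from Ioi 1 to Ioi c when f vanishes on Ioc 1 c
lemma aux_shift {E : Type*} [NormedAddCommGroup E] [NormedSpace ℝ E] {f : ℝ → E} {c : ℝ}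
    (hc : 1 ≤ c) (h0 : ∀ x ∈ Ioc (1:ℝ) c, f x = 0) (hint : IntegrableOn f (Ioi c)) :
    IntegrableOn f (Ioi 1) ∧ (∫ x in Ioi (1:ℝ), f x) = ∫ x in Ioi c, f x := by
  have hu : Ioc (1:ℝ) c ∪ Ioi c = Ioi 1 := Set.Ioc_union_Ioi_eq_Ioi hc
  have hd : Disjoint (Ioc (1:ℝ) c) (Ioi c) := Set.Ioc_disjoint_Ioi le_rfl
  have h1 : IntegrableOn f (Ioc (1:ℝ) c) := by
    refine (integrableOn_congr_fun h0 measurableSet_Ioc).mpr ?_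
    exact integrableOn_zero
  have hI : IntegrableOn f (Ioi 1) := hu ▸ h1.union hint
  refine ⟨hI, ?_⟩
  rw [← hu, setIntegral_union hd measurableSet_Ioi h1 hint,
    setIntegral_congr_fun measurableSet_Ioc h0]
  simp

noncomputable def FF (s : ℂ) (n : ℕ) (x : ℝ) : ℂ :=
  ((Λ n * max (x - n) 0 : ℝ) : ℂ) / (x:ℂ)^(s+2)

lemma FF_eqOn {s : ℂ} {n : ℕ} (hn : 1 ≤ n) :
    EqOn (FF s n) (fun x : ℝ => (Λ n : ℂ) * (x:ℂ)^(-(s+1)) - (Λ n : ℂ) * n * (x:ℂ)^(-(s+2)))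
      (Ioi (n:ℝ)) := by
  intro x hx
  have hc1 : (1:ℝ) ≤ n := by exact_mod_cast hn
  have hx0 : (0:ℝ) < x := by simp only [mem_Ioi] at hx; linarith
  have hxC : (x:ℂ) ≠ 0 := by exact_mod_cast hx0.ne'
  have hmax : max (x - (n:ℝ)) 0 = x - n := max_eq_left (by simp only [mem_Ioi] at hx; linarith)
  simp only [FF, hmax]
  rw [Complex.cpow_neg, Complex.cpow_neg]
  have h1 : (x:ℂ)^(s+2) ≠ 0 := by
    intro h
    rcases Complex.cpow_eq_zero_iff _ _ |>.mp h with ⟨h', _⟩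
    exact hxC h'
  have hsplit : (x:ℂ)^(s+2) = (x:ℂ)^(s+1) * x := by
    conv_lhs => rw [show s + 2 = (s+1) + 1 by ring, Complex.cpow_add _ _ hxC, Complex.cpow_one]
  have h2 : (x:ℂ)^(s+1) ≠ 0 := by
    intro h
    rcases Complex.cpow_eq_zero_iff _ _ |>.mp h with ⟨h', _⟩
    exact hxC h'
  rw [div_eq_iff h1]
  push_cast
  rw [hsplit]
  field_simp

lemma FF_zero_on {s : ℂ} {n : ℕ} {x : ℝ} (hx : x ≤ n) : FF s n x = 0 := by
  have : max (x - (n:ℝ)) 0 = 0 := max_eq_right (by linarith)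
  simp [FF, this]

lemma FF_intOn {s : ℂ} (hs : 1 < s.re) {n : ℕ} (hn : 1 ≤ n) :
    IntegrableOn (FF s n) (Ioi (n:ℝ)) := by
  have hc0 : (0:ℝ) < n := by exact_mod_cast hn
  refine (integrableOn_congr_fun (FF_eqOn hn) measurableSet_Ioi).mpr ?_
  apply Integrable.sub
  · exact (integrableOn_Ioi_cpow_of_lt (by simp; linarith) hc0).const_mul _
  · exact (integrableOn_Ioi_cpow_of_lt (by simp; linarith) hc0).const_mul _

lemma FF_integral {s : ℂ} (hs : 1 < s.re) {n : ℕ} (hn : 1 ≤ n) :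
    (∫ x in Ioi (n:ℝ), FF s n x) = (Λ n : ℂ) * ((n:ℂ)^(s))⁻¹ / (s * (s+1)) := by
  have hc0 : (0:ℝ) < n := by exact_mod_cast hn
  have hcC : ((n:ℝ):ℂ) ≠ 0 := by exact_mod_cast hc0.ne'
  have hs0 : s ≠ 0 := fun h => by simp [h] at hs; linarith
  have hs1 : s + 1 ≠ 0 := by
    intro h
    have : (s+1).re = 0 := by rw [h]; simp
    simp [Complex.add_re] at this; linarith
  rw [setIntegral_congr_fun measurableSet_Ioi (FF_eqOn hn)]
  rw [integral_sub ((integrableOn_Ioi_cpow_of_lt (by simp; linarith) hc0).const_mul _)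
    ((integrableOn_Ioi_cpow_of_lt (by simp; linarith) hc0).const_mul _),
    integral_const_mul, integral_const_mul,
    integral_Ioi_cpow_of_lt (by simp; linarith) hc0,
    integral_Ioi_cpow_of_lt (by simp; linarith) hc0]
  have e1 : -(s+1) + 1 = -s := by ring
  have e2 : -(s+2) + 1 = -(s+1) := by ring
  rw [e1, e2]
  have h4 : ((n:ℝ):ℂ) ^ (-(s+1)) = ((n:ℝ):ℂ) ^ (-s) / n := by
    rw [eq_div_iff (by exact_mod_cast hc0.ne'), show -s = -(s+1) + 1 by ring,
      Complex.cpow_add _ _ hcC, Complex.cpow_one]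
    push_cast; ring
  have hns : ((n:ℝ):ℂ)^s ≠ 0 := by
    intro h
    rcases Complex.cpow_eq_zero_iff _ _ |>.mp h with ⟨h', _⟩
    exact hcC h'
  rw [h4, Complex.cpow_neg, neg_div_neg_eq, neg_div_neg_eq]
  push_cast
  push_cast at hns hcC
  field_simp [hns]
  ring

lemma FF_norm_int_le {s : ℂ} (hs : 1 < s.re) {n : ℕ} (hn : 1 ≤ n) :
    (∫ x in Ioi (n:ℝ), ‖FF s n x‖) ≤ Λ n * (n:ℝ)^(-s.re) / s.re := by
  have hc0 : (0:ℝ) < n := by exact_mod_cast hn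
  have hbound : ∀ x ∈ Ioi (n:ℝ), ‖FF s n x‖ ≤ Λ n * x^(-(s.re+1)) := by
    intro x hx
    simp only [mem_Ioi] at hx
    have hx0 : (0:ℝ) < x := lt_of_le_of_lt hc0.le hx
    have hmax : max (x - (n:ℝ)) 0 = x - n := max_eq_left (by linarith)
    have hΛ : (0:ℝ) ≤ Λ n := ArithmeticFunction.vonMangoldt_nonneg
    rw [FF, hmax, norm_div, Complex.norm_real,
      Complex.norm_cpow_eq_rpow_re_of_pos hx0]
    have hre : (s+2).re = s.re + 2 := by simp 
    rw [hre, Real.norm_eq_abs, abs_of_nonneg (mul_nonneg hΛ (by linarith))]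
    rw [div_le_iff₀ (Real.rpow_pos_of_pos hx0 _)]
    have hxx : x^(-(s.re+1)) * x^(s.re+2) = x := by
      rw [← Real.rpow_add hx0, show -(s.re+1)+(s.re+2) = 1 by ring, Real.rpow_one]
    calc Λ n * (x - n) ≤ Λ n * x := by nlinarith
      _ = Λ n * (x^(-(s.re+1)) * x^(s.re+2)) := by rw [hxx]
      _ = Λ n * x^(-(s.re+1)) * x^(s.re+2) := by ring
  have hg : IntegrableOn (fun x : ℝ => Λ n * x^(-(s.re+1))) (Ioi (n:ℝ)) :=
    (integrableOn_Ioi_rpow_of_lt (by linarith) hc0).const_mul _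
  calc (∫ x in Ioi (n:ℝ), ‖FF s n x‖)
      ≤ ∫ x in Ioi (n:ℝ), Λ n * x^(-(s.re+1)) :=
        setIntegral_mono_on (FF_intOn hs hn).norm hg measurableSet_Ioi hbound
    _ = Λ n * (n:ℝ)^(-s.re) / s.re := by
        rw [integral_const_mul, integral_Ioi_rpow_of_lt (by linarith) hc0,
          show -(s.re+1)+1 = -s.re by ring, neg_div_neg_eq, mul_div_assoc]

lemma FF_main {s : ℂ} (hs : 1 < s.re) {n : ℕ} (hn : 1 ≤ n) :
    IntegrableOn (FF s n) (Ioi (1:ℝ)) ∧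
    (∫ x in Ioi (1:ℝ), FF s n x) = (Λ n : ℂ) * ((n:ℂ)^s)⁻¹ / (s*(s+1)) ∧
    (∫ x in Ioi (1:ℝ), ‖FF s n x‖) ≤ Λ n * (n:ℝ)^(-s.re) / s.re := by
  have hc1 : (1:ℝ) ≤ n := by exact_mod_cast hn
  have h0 : ∀ x ∈ Ioc (1:ℝ) (n:ℝ), FF s n x = 0 := fun x hx => FF_zero_on hx.2
  obtain ⟨hI, hEq⟩ := aux_shift hc1 h0 (FF_intOn hs hn)
  obtain ⟨hIn, hEqn⟩ := aux_shift (f := fun x => ‖FF s n x‖) hc1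
    (fun x hx => by show ‖FF s n x‖ = 0; rw [h0 x hx, norm_zero]) (FF_intOn hs hn).norm
  refine ⟨hI, ?_, ?_⟩
  · rw [hEq, FF_integral hs hn]
  · rw [hEqn]
    exact FF_norm_int_le hs hn

lemma pointwise_tsum {s : ℂ} {x : ℝ} (hx : 1 < x) :
    ((chebyshevPsi1 x : ℝ) : ℂ) / (x:ℂ)^(s+2) = ∑' n : ℕ, FF s n x := by
  have h0x : (0:ℝ) ≤ x := by linarith
  have hsupp : ∀ n ∉ Finset.Icc 1 ⌊x⌋₊, FF s n x = 0 := by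
    intro n hn
    simp only [Finset.mem_Icc, not_and, not_le] at hn
    rcases Nat.eq_zero_or_pos n with h | h
    · simp [FF, h]
    · have : ⌊x⌋₊ < n := hn h
      have : x < n := (Nat.floor_lt h0x).mp this
      exact FF_zero_on this.le
  rw [tsum_eq_sum hsupp, psi1_formula hx.le]
  push_cast
  rw [Finset.sum_div]
  refine Finset.sum_congr rfl fun n hn => ?_
  simp only [Finset.mem_Icc] at hn
  have hnx : (n:ℝ) ≤ x := le_trans (by exact_mod_cast hn.2 : (n:ℝ) ≤ ⌊x⌋₊) (Nat.floor_le h0x)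
  have hmax : max (x - (n:ℝ)) 0 = x - n := max_eq_left (by linarith)
  rw [FF, hmax]
  push_cast
  ring

theorem neg_zeta_logDeriv_eq_integral (s : ℂ) (hs : 1 < s.re) :
    -(deriv riemannZeta s / riemannZeta s)
      = s * (s + 1) * ∫ x in Set.Ioi (1 : ℝ), (chebyshevPsi1 x : ℂ) / (x : ℂ) ^ (s + 2) := by
  have hs0 : s ≠ 0 := fun h => by simp [h] at hs; linarith
  have hs1 : s + 1 ≠ 0 := by
    intro h
    have : (s+1).re = 0 := by rw [h]; simp
    simp [Complex.add_re] at this; linarith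
  have hσ : (0:ℝ) < s.re := by linarith
  -- per-n facts, all n
  have hF : ∀ n : ℕ, IntegrableOn (FF s n) (Ioi (1:ℝ)) ∧
      (∫ x in Ioi (1:ℝ), FF s n x) = LSeries.term (fun m => (Λ m : ℂ)) s n / (s * (s+1)) ∧
      (∫ x in Ioi (1:ℝ), ‖FF s n x‖) ≤ Λ n * (n:ℝ)^(-s.re) / s.re := by
    intro n
    rcases Nat.eq_zero_or_pos n with h | h
    · subst h
      have h0 : (fun x : ℝ => FF s 0 x) = fun _ => (0:ℂ) := by
        funext x; simp [FF]
      refine ⟨?_, ?_, ?_⟩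
      · rw [IntegrableOn, show FF s 0 = fun _ => (0:ℂ) from h0]
        exact integrable_zero _ _ _
      · rw [show FF s 0 = fun _ => (0:ℂ) from h0]
        simp [LSeries.term]
      · rw [show FF s 0 = fun _ => (0:ℂ) from h0]
        simp [ArithmeticFunction.map_zero]
    · obtain ⟨hI, hEq, hLe⟩ := FF_main hs h
      refine ⟨hI, ?_, hLe⟩
      rw [hEq, LSeries.term_of_ne_zero (Nat.pos_iff_ne_zero.mp h)]
      rw [div_eq_mul_inv ((Λ n : ℂ)) ((n:ℂ)^s)]
  -- summability of the norm integrals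
  have hsum0 : Summable (LSeries.term (fun m => (Λ m : ℂ)) ((s.re : ℂ))) := by
    have := ArithmeticFunction.LSeriesSummable_vonMangoldt (s := ((s.re : ℂ)))
      (by simp [hs])
    exact this
  have hsumb : Summable (fun n : ℕ => Λ n * (n:ℝ)^(-s.re) / s.re) := by
    have h1 : Summable (fun n : ℕ => ‖LSeries.term (fun m => (Λ m : ℂ)) ((s.re : ℂ)) n‖) :=
      summable_norm_iff.mpr hsum0
    refine ((h1.div_const s.re).congr ?_)
    intro n
    rcases Nat.eq_zero_or_pos n with h | h
    · simp [h, LSeries.term, ArithmeticFunction.map_zero]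
    · have hn0 : (0:ℝ) < n := by exact_mod_cast h
      rw [LSeries.term_of_ne_zero (Nat.pos_iff_ne_zero.mp h), norm_div, Complex.norm_real,
        show ((n : ℕ) : ℂ) = ((n:ℝ) : ℂ) from by norm_cast,
        Complex.norm_cpow_eq_rpow_re_of_pos hn0, Complex.ofReal_re,
        Real.norm_eq_abs, abs_of_nonneg ArithmeticFunction.vonMangoldt_nonneg,
        Real.rpow_neg hn0.le]
      ring
  have hsumnorm : Summable (fun n : ℕ => ∫ x in Ioi (1:ℝ), ‖FF s n x‖) := by
    refine Summable.of_nonneg_of_le (fun n => ?_) (fun n => (hF n).2.2) hsumb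
    exact setIntegral_nonneg measurableSet_Ioi (fun x _ => norm_nonneg _)
  -- swap integral and sum
  have hswap : (∑' n : ℕ, ∫ x in Ioi (1:ℝ), FF s n x)
      = ∫ x in Ioi (1:ℝ), ∑' n : ℕ, FF s n x :=
    MeasureTheory.integral_tsum_of_summable_integral_norm (fun n => (hF n).1) hsumnorm
  have hint : (∫ x in Ioi (1:ℝ), (chebyshevPsi1 x : ℂ) / (x:ℂ)^(s+2))
      = ∑' n : ℕ, ∫ x in Ioi (1:ℝ), FF s n x := by
    rw [hswap]
    exact setIntegral_congr_fun measurableSet_Ioi (fun x hx => pointwise_tsum hx)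
  rw [hint]
  have : (∑' n : ℕ, ∫ x in Ioi (1:ℝ), FF s n x)
      = LSeries (fun m => (Λ m : ℂ)) s / (s * (s+1)) := by
    rw [tsum_congr (fun n => (hF n).2.1)]
    rw [LSeries]
    exact tsum_div_const
  rw [this, ArithmeticFunction.LSeries_vonMangoldt_eq_deriv_riemannZeta_div hs,
    mul_div_assoc', mul_div_cancel_left₀ _ (mul_ne_zero hs0 hs1), neg_div]
end

section
/- For all natural numbers a and b, if explog(a, b) holds, then |b − log(a + 1)| < 2. -/
/-- explog(a, b) holds iff there is a positive integer x with x > b + 1 and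
(1 + 1/x)^(x·b) ≤ a + 1 < 4·(1 + 1/x)^(x·b), the powers taken in ℝ. -/
def explog (a b : ℕ) : Prop :=
  ∃ x : ℕ, b + 1 < x ∧ (1 + 1 / (x : ℝ)) ^ (x * b) ≤ (a : ℝ) + 1 ∧
    (a : ℝ) + 1 < 4 * (1 + 1 / (x : ℝ)) ^ (x * b)

theorem explog_log_close (a b : ℕ) (h : explog a b) :
    |(b : ℝ) - Real.log ((a : ℝ) + 1)| < 2 := by
  obtain ⟨x, hx, h1, h2⟩ := h
  have hX0 : (0 : ℝ) < (x : ℝ) := by exact_mod_cast (by omega : 0 < x)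
  have hb' : (b : ℝ) + 1 < (x : ℝ) := by exact_mod_cast hx
  set t : ℝ := 1 + 1 / (x : ℝ) with ht
  clear_value t
  have ht0 : 0 < t := by rw [ht]; positivity
  have hc0 : 0 < t ^ (x * b) := pow_pos ht0 _
  have ha0 : (0 : ℝ) < (a : ℝ) + 1 := by positivity
  have hlog1 : Real.log (t ^ (x * b)) ≤ Real.log ((a : ℝ) + 1) :=
    Real.log_le_log hc0 h1
  have hlog2 : Real.log ((a : ℝ) + 1) < Real.log 4 + Real.log (t ^ (x * b)) := by
    have := Real.log_lt_log ha0 h2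
    rwa [Real.log_mul (by norm_num) hc0.ne'] at this
  rw [Real.log_pow] at hlog1 hlog2
  push_cast at hlog1 hlog2
  set L := Real.log t with hL
  clear_value L
  have hup : L ≤ 1 / (x : ℝ) := by
    have h := Real.log_le_sub_one_of_pos ht0
    have : t - 1 = 1 / (x : ℝ) := by rw [ht]; ring
    rw [hL]; linarith
  have hlow : 1 / ((x : ℝ) + 1) ≤ L := by
    have h := Real.one_sub_inv_le_log_of_pos ht0
    have heq : 1 - t⁻¹ = 1 / ((x : ℝ) + 1) := by
      rw [ht]; field_simp; ring
    linarith [heq ▸ h]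
  have hnL_le : (x : ℝ) * (b : ℝ) * L ≤ (b : ℝ) := by
    have h := mul_le_mul_of_nonneg_left hup (by positivity : (0 : ℝ) ≤ (x : ℝ) * (b : ℝ))
    have heq : (x : ℝ) * (b : ℝ) * (1 / (x : ℝ)) = (b : ℝ) := by field_simp
    linarith [heq ▸ h]
  have hnL_gt : (b : ℝ) - 1 < (x : ℝ) * (b : ℝ) * L := by
    have h := mul_le_mul_of_nonneg_left hlow (by positivity : (0 : ℝ) ≤ (x : ℝ) * (b : ℝ))
    have h2 : (b : ℝ) - 1 < (x : ℝ) * (b : ℝ) * (1 / ((x : ℝ) + 1)) := by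
      rw [mul_one_div, lt_div_iff₀ (by linarith)]
      nlinarith
    linarith
  have hlog4 : Real.log 4 < 2 := by
    have h4 : (4 : ℝ) = 2 ^ 2 := by norm_num
    rw [h4, Real.log_pow]
    have := Real.log_two_lt_d9
    push_cast
    nlinarith
  rw [abs_lt]
  constructor <;> nlinarith
end

section
/- For every natural number a there exists a natural number b such that explog(a, b) holds. -/
theorem explog_total (a : ℕ) : ∃ b : ℕ, explog a b := by
  set b : ℕ := ⌊Real.log (a + 1)⌋₊ with hb
  set x : ℕ := 3 * (b + 1) with hx
  have hA1 : (1:ℝ) ≤ (a:ℝ) + 1 := by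
    have := Nat.cast_nonneg (α := ℝ) a; linarith
  have hxR : (0:ℝ) < (x:ℝ) := by positivity
  have hB : (0:ℝ) ≤ (b:ℝ) := by positivity
  have hxb : ((x:ℝ)) = 3 * ((b:ℝ) + 1) := by push_cast [hx]; ring
  refine ⟨b, x, by omega, ?_, ?_⟩
  · -- (1+1/x)^(x*b) ≤ exp b ≤ a+1
    have h1 : (1 + 1/(x:ℝ)) ≤ Real.exp (1/(x:ℝ)) := by
      have := Real.add_one_le_exp (1/(x:ℝ)); linarith
    have h2 : (1 + 1/(x:ℝ)) ^ (x*b) ≤ Real.exp (1/(x:ℝ)) ^ (x*b) := by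
      apply pow_le_pow_left₀ (by positivity) h1
    have h3 : Real.exp (1/(x:ℝ)) ^ (x*b) = Real.exp b := by
      rw [← Real.exp_nat_mul]
      congr 1
      push_cast
      field_simp
    have h4 : Real.exp (b:ℝ) ≤ (a:ℝ) + 1 := by
      have hlog : (b:ℝ) ≤ Real.log ((a:ℝ) + 1) :=
        Nat.floor_le (Real.log_nonneg hA1)
      calc Real.exp (b:ℝ) ≤ Real.exp (Real.log ((a:ℝ)+1)) := Real.exp_le_exp.2 hlog
        _ = (a:ℝ) + 1 := Real.exp_log (by positivity)
    push_cast at h3 ⊢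
    linarith
  · -- a+1 < exp(b+1) ≤ 4*(1+1/x)^(x*b)
    have h5 : (a:ℝ) + 1 < Real.exp ((b:ℝ) + 1) := by
      have hlog : Real.log ((a:ℝ) + 1) < (b:ℝ) + 1 := by
        have := Nat.lt_floor_add_one (Real.log ((a:ℝ)+1)); push_cast at this ⊢; linarith
      calc (a:ℝ) + 1 = Real.exp (Real.log ((a:ℝ)+1)) := (Real.exp_log (by positivity)).symm
        _ < Real.exp ((b:ℝ)+1) := Real.exp_lt_exp.2 hlog
    have hlog2 : (0.6931471803:ℝ) < Real.log 2 := Real.log_two_gt_d9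
    have hlog4 : Real.log 4 = 2 * Real.log 2 := by
      rw [show (4:ℝ) = 2^2 by norm_num, Real.log_pow]; push_cast; ring
    -- log (1+1/x) ≥ 1/(x+1)
    have hll : 1 / ((x:ℝ) + 1) ≤ Real.log (1 + 1/(x:ℝ)) := by
      have hy : (0:ℝ) < 1 / (1 + 1/(x:ℝ)) := by positivity
      have := Real.log_le_sub_one_of_pos hy
      rw [Real.log_div one_ne_zero (by positivity), Real.log_one] at this
      have heq : 1 / (1 + 1/(x:ℝ)) = (x:ℝ) / ((x:ℝ)+1) := by field_simp
      rw [heq] at this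
      have : 1 - (x:ℝ)/((x:ℝ)+1) ≤ Real.log (1 + 1/(x:ℝ)) := by linarith
      have heq2 : 1 - (x:ℝ)/((x:ℝ)+1) = 1/((x:ℝ)+1) := by field_simp; ring
      linarith
    have hpow : (1 + 1/(x:ℝ)) ^ (x*b) = Real.exp ((x*b : ℕ) * Real.log (1 + 1/(x:ℝ))) := by
      rw [Real.exp_nat_mul, Real.exp_log (by positivity)]
    have hkey : (b:ℝ) + 1 ≤ ((x*b:ℕ):ℝ) * Real.log (1 + 1/(x:ℝ)) + Real.log 4 := by
      have hcast : ((x*b:ℕ):ℝ) = (x:ℝ) * (b:ℝ) := by push_cast; ring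
      have h6 : (x:ℝ)*(b:ℝ) * (1/((x:ℝ)+1)) ≤ (x:ℝ)*(b:ℝ) * Real.log (1 + 1/(x:ℝ)) := by
        apply mul_le_mul_of_nonneg_left hll (by positivity)
      have h7 : (b:ℝ) + 1 - Real.log 4 ≤ (x:ℝ)*(b:ℝ) * (1/((x:ℝ)+1)) := by
        have hpos : (0:ℝ) < 3*((b:ℝ)+1)+1 := by linarith
        rw [hxb, hlog4, mul_one_div, le_div_iff₀ hpos]
        nlinarith [hB, hlog2]
      rw [hcast]; linarith
    have h8 : Real.exp ((b:ℝ)+1) ≤ 4 * (1 + 1/(x:ℝ)) ^ (x*b) := by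
      rw [hpow, show (4:ℝ) = Real.exp (Real.log 4) from (Real.exp_log (by norm_num)).symm,
        ← Real.exp_add]
      exact Real.exp_le_exp.2 (by linarith)
    linarith
end
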